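/- Every sequent provable in cut-free GS4 is provable in cut-free lTS4. -/

import Mathlib

inductive Fml : Type
  | var : ℕ → Fml
  | and : Fml → Fml → Fml
  | or  : Fml → Fml → Fml
  | imp : Fml → Fml → Fml
  | neg : Fml → Fml
  | box : Fml → Fml
  | dia : Fml → Fml
  deriving DecidableEq

open Fml

abbrev Ctx := Finset Fml

/-- □Γ -/
def boxS (Γ : Ctx) : Ctx := Γ.image Fml.box
/-- ◇Γ -/
def diaS (Γ : Ctx) : Ctx := Γ.image Fml.dia
/-- ¬□Γ -/
def nboxS (Γ : Ctx) : Ctx := Γ.image (fun g => Fml.neg (Fml.box g))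
/-- ¬◇Γ -/
def ndiaS (Γ : Ctx) : Ctx := Γ.image (fun g => Fml.neg (Fml.dia g))

/-- The twist sequent calculus lTS4; the Boolean index is `true` iff the cut rule is allowed.
    `lTS4 false` is the cut-free fragment. -/
inductive lTS4 : Bool → Ctx → Ctx → Prop
  | initV (c : Bool) (p : ℕ) : lTS4 c {var p} {var p}
  | initNV (c : Bool) (p : ℕ) : lTS4 c {neg (var p)} {neg (var p)}
  | initL (c : Bool) (p : ℕ) : lTS4 c {neg (var p), var p} ∅
  | initR (c : Bool) (p : ℕ) : lTS4 c ∅ {neg (var p), var p}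
  | cut (Γ Δ : Ctx) (α : Fml) :
      lTS4 true Γ {α} → lTS4 true (insert α Γ) Δ → lTS4 true Γ Δ
  | weL (c Γ Δ α) : lTS4 c Γ Δ → lTS4 c (insert α Γ) Δ
  | weR (c Γ Δ α) : lTS4 c Γ Δ → lTS4 c Γ (insert α Δ)
  | andL (c Γ Δ α β) : lTS4 c (insert α (insert β Γ)) Δ → lTS4 c (insert (α.and β) Γ) Δ
  | andR (c Γ Δ α β) : lTS4 c Γ (insert α Δ) → lTS4 c Γ (insert β Δ) →
      lTS4 c Γ (insert (α.and β) Δ)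
  | orL (c Γ Δ α β) : lTS4 c (insert α Γ) Δ → lTS4 c (insert β Γ) Δ →
      lTS4 c (insert (α.or β) Γ) Δ
  | orR (c Γ Δ α β) : lTS4 c Γ (insert α (insert β Δ)) → lTS4 c Γ (insert (α.or β) Δ)
  | impL (c Γ Δ α β) : lTS4 c Γ (insert α Δ) → lTS4 c (insert β Γ) Δ →
      lTS4 c (insert (α.imp β) Γ) Δ
  | impR (c Γ Δ α β) : lTS4 c (insert α Γ) (insert β Δ) → lTS4 c Γ (insert (α.imp β) Δ)
  | boxL (c Γ Δ α) : lTS4 c (insert α Γ) Δ → lTS4 c (insert α.box Γ) Δ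
  | boxR (c Γ₁ Γ₂ Δ₁ Δ₂ α) :
      lTS4 c (boxS Γ₁ ∪ ndiaS Γ₂) (insert α (diaS Δ₁ ∪ nboxS Δ₂)) →
      lTS4 c (boxS Γ₁ ∪ ndiaS Γ₂) (insert α.box (diaS Δ₁ ∪ nboxS Δ₂))
  | diaL (c Γ₁ Γ₂ Δ₁ Δ₂ α) :
      lTS4 c (insert α (boxS Γ₁ ∪ ndiaS Γ₂)) (diaS Δ₁ ∪ nboxS Δ₂) →
      lTS4 c (insert α.dia (boxS Γ₁ ∪ ndiaS Γ₂)) (diaS Δ₁ ∪ nboxS Δ₂)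
  | diaR (c Γ Δ α) : lTS4 c Γ (insert α Δ) → lTS4 c Γ (insert α.dia Δ)
  | nnL (c Γ Δ α) : lTS4 c (insert α Γ) Δ → lTS4 c (insert α.neg.neg Γ) Δ
  | nnR (c Γ Δ α) : lTS4 c Γ (insert α Δ) → lTS4 c Γ (insert α.neg.neg Δ)
  | nandL (c Γ Δ α β) : lTS4 c Γ (insert α Δ) → lTS4 c Γ (insert β Δ) →
      lTS4 c (insert (α.and β).neg Γ) Δ
  | nandR (c Γ Δ α β) : lTS4 c (insert α (insert β Γ)) Δ → lTS4 c Γ (insert (α.and β).neg Δ)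
  | norL (c Γ Δ α β) : lTS4 c Γ (insert α (insert β Δ)) → lTS4 c (insert (α.or β).neg Γ) Δ
  | norR (c Γ Δ α β) : lTS4 c (insert α Γ) Δ → lTS4 c (insert β Γ) Δ →
      lTS4 c Γ (insert (α.or β).neg Δ)
  | nimpL (c Γ Δ α β) : lTS4 c (insert α Γ) (insert β Δ) → lTS4 c (insert (α.imp β).neg Γ) Δ
  | nimpR (c Γ Δ α β) : lTS4 c Γ (insert α Δ) → lTS4 c (insert β Γ) Δ →
      lTS4 c Γ (insert (α.imp β).neg Δ)
  | nboxL (c Γ₁ Γ₂ Δ₁ Δ₂ α) :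
      lTS4 c (boxS Γ₁ ∪ ndiaS Γ₂) (insert α (diaS Δ₁ ∪ nboxS Δ₂)) →
      lTS4 c (insert α.box.neg (boxS Γ₁ ∪ ndiaS Γ₂)) (diaS Δ₁ ∪ nboxS Δ₂)
  | nboxR (c Γ Δ α) : lTS4 c (insert α Γ) Δ → lTS4 c Γ (insert α.box.neg Δ)
  | ndiaL (c Γ Δ α) : lTS4 c Γ (insert α Δ) → lTS4 c (insert α.dia.neg Γ) Δ
  | ndiaR (c Γ₁ Γ₂ Δ₁ Δ₂ α) :
      lTS4 c (insert α (boxS Γ₁ ∪ ndiaS Γ₂)) (diaS Δ₁ ∪ nboxS Δ₂) →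
      lTS4 c (boxS Γ₁ ∪ ndiaS Γ₂) (insert α.dia.neg (diaS Δ₁ ∪ nboxS Δ₂))

/-- Kripke's sequent calculus GS4; the Boolean index is `true` iff the cut rule is allowed. -/
inductive GS4 : Bool → Ctx → Ctx → Prop
  | initV (c : Bool) (p : ℕ) : GS4 c {var p} {var p}
  | cut (Γ Δ : Ctx) (α : Fml) :
      GS4 true Γ {α} → GS4 true (insert α Γ) Δ → GS4 true Γ Δ
  | weL (c Γ Δ α) : GS4 c Γ Δ → GS4 c (insert α Γ) Δ
  | weR (c Γ Δ α) : GS4 c Γ Δ → GS4 c Γ (insert α Δ)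
  | andL (c Γ Δ α β) : GS4 c (insert α (insert β Γ)) Δ → GS4 c (insert (α.and β) Γ) Δ
  | andR (c Γ Δ α β) : GS4 c Γ (insert α Δ) → GS4 c Γ (insert β Δ) →
      GS4 c Γ (insert (α.and β) Δ)
  | orL (c Γ Δ α β) : GS4 c (insert α Γ) Δ → GS4 c (insert β Γ) Δ →
      GS4 c (insert (α.or β) Γ) Δ
  | orR (c Γ Δ α β) : GS4 c Γ (insert α (insert β Δ)) → GS4 c Γ (insert (α.or β) Δ)
  | impL (c Γ Δ α β) : GS4 c Γ (insert α Δ) → GS4 c (insert β Γ) Δ →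
      GS4 c (insert (α.imp β) Γ) Δ
  | impR (c Γ Δ α β) : GS4 c (insert α Γ) (insert β Δ) → GS4 c Γ (insert (α.imp β) Δ)
  | negL (c Γ Δ α) : GS4 c Γ (insert α Δ) → GS4 c (insert α.neg Γ) Δ
  | negR (c Γ Δ α) : GS4 c (insert α Γ) Δ → GS4 c Γ (insert α.neg Δ)
  | boxL (c Γ Δ α) : GS4 c (insert α Γ) Δ → GS4 c (insert α.box Γ) Δ
  | boxRk (c Γ Δ α) : GS4 c (boxS Γ) (insert α (diaS Δ)) →
      GS4 c (boxS Γ) (insert α.box (diaS Δ))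
  | diaLk (c Γ Δ α) : GS4 c (insert α (boxS Γ)) (diaS Δ) →
      GS4 c (insert α.dia (boxS Γ)) (diaS Δ)
  | diaR (c Γ Δ α) : GS4 c Γ (insert α Δ) → GS4 c Γ (insert α.dia Δ)

section Helpers

def nd : Fml → Fml
  | .neg b => b
  | a => .neg a

@[simp] lemma nd_var (p) : nd (var p) = neg (var p) := rfl
@[simp] lemma nd_and (a b : Fml) : nd (a.and b) = neg (a.and b) := rfl
@[simp] lemma nd_or (a b : Fml) : nd (a.or b) = neg (a.or b) := rfl
@[simp] lemma nd_imp (a b : Fml) : nd (a.imp b) = neg (a.imp b) := rfl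
@[simp] lemma nd_neg (a) : nd (neg a) = a := rfl
@[simp] lemma nd_box (a) : nd (box a) = neg (box a) := rfl
@[simp] lemma nd_dia (a) : nd (dia a) = neg (dia a) := rfl

def sz : Fml → ℕ
  | .var _ => 1
  | .and a b => sz a + sz b + 1
  | .or a b => sz a + sz b + 1
  | .imp a b => sz a + sz b + 1
  | .neg a => sz a + 1
  | .box a => sz a + 1
  | .dia a => sz a + 1

lemma sz_pos (a : Fml) : 0 < sz a := by cases a <;> simp [sz]

lemma convL (c : Bool) (Γ Δ : Ctx) (a : Fml) (h : lTS4 c (insert (nd a) Γ) Δ) :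
    lTS4 c (insert a.neg Γ) Δ := by
  cases a <;> first | exact h | exact lTS4.nnL _ _ _ _ h

lemma convR (c : Bool) (Γ Δ : Ctx) (a : Fml) (h : lTS4 c Γ (insert (nd a) Δ)) :
    lTS4 c Γ (insert a.neg Δ) := by
  cases a <;> first | exact h | exact lTS4.nnR _ _ _ _ h

lemma weakenL {c : Bool} {Γ Δ Γ' : Ctx} (h : lTS4 c Γ Δ) (hs : Γ ⊆ Γ') : lTS4 c Γ' Δ := by
  have h2 : ∀ S : Ctx, lTS4 c (Γ ∪ S) Δ := by
    intro S
    induction S using Finset.induction_on with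
    | empty => simpa using h
    | insert _ _ hx ih => rw [Finset.union_insert]; exact lTS4.weL _ _ _ _ ih
  have := h2 Γ'
  rwa [Finset.union_eq_right.2 hs] at this

lemma weakenR {c : Bool} {Γ Δ Δ' : Ctx} (h : lTS4 c Γ Δ) (hs : Δ ⊆ Δ') : lTS4 c Γ Δ' := by
  have h2 : ∀ S : Ctx, lTS4 c Γ (Δ ∪ S) := by
    intro S
    induction S using Finset.induction_on with
    | empty => simpa using h
    | insert _ _ hx ih => rw [Finset.union_insert]; exact lTS4.weR _ _ _ _ ih
  have := h2 Δ'
  rwa [Finset.union_eq_right.2 hs] at this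

lemma weakAll {c : Bool} {Γ Δ Γ' Δ' : Ctx} (h : lTS4 c Γ Δ) (h1 : Γ ⊆ Γ') (h2 : Δ ⊆ Δ') :
    lTS4 c Γ' Δ' := weakenR (weakenL h h1) h2

lemma subTail {x a : Fml} {Δ Δ' : Ctx} (h : insert x Δ ⊆ insert a Δ') : Δ ⊆ insert a Δ' :=
  (Finset.insert_subset_iff.1 h).2

lemma subHead {x a : Fml} {Δ Δ' : Ctx} (h : insert x Δ ⊆ insert a Δ') : x = a ∨ x ∈ Δ' :=
  Finset.mem_insert.1 (h (Finset.mem_insert_self _ _))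

lemma liftIns {a : Fml} {Δ Δ' : Ctx} (h : Δ ⊆ insert a Δ') (x : Fml) :
    insert x Δ ⊆ insert a (insert x Δ') :=
  Finset.insert_subset_iff.2
    ⟨Finset.mem_insert_of_mem (Finset.mem_insert_self _ _),
     h.trans (Finset.insert_subset_insert _ (Finset.subset_insert _ _))⟩

lemma drop {a : Fml} {S T : Ctx} (h : S ⊆ insert a T) (ha : a ∉ S) : S ⊆ T := by
  intro x hx
  rcases Finset.mem_insert.1 (h hx) with rfl | hm
  · exact absurd hx ha
  · exact hm

lemma splitR {a : Fml} {Δ₁ Δ₂ : Ctx} (h : a ∈ diaS Δ₁ ∪ nboxS Δ₂) :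
    ∃ Δ₁' Δ₂' : Ctx,
      diaS Δ₁ ∪ nboxS Δ₂ = insert a (diaS Δ₁' ∪ nboxS Δ₂') ∧
      a ∉ diaS Δ₁' ∪ nboxS Δ₂' ∧
      (∀ ψ, a ≠ box ψ) ∧ (∀ ψ, a ≠ neg (dia ψ)) ∧
      (∀ Γ₁ Γ₂ : Ctx, ∃ Γ₁' Γ₂' : Ctx,
        insert (nd a) (boxS Γ₁ ∪ ndiaS Γ₂) = boxS Γ₁' ∪ ndiaS Γ₂') := by
  rw [Finset.mem_union] at h
  rcases h with h | h
  · simp only [diaS, Finset.mem_image] at h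
    obtain ⟨δ, hδ, rfl⟩ := h
    refine ⟨Δ₁.erase δ, Δ₂, ?_, ?_, by simp, by simp, ?_⟩
    · conv_lhs => rw [← Finset.insert_erase hδ]
      simp [diaS, Finset.image_insert, Finset.insert_union]
    · simp [diaS, nboxS, Finset.mem_erase]
    · intro Γ₁ Γ₂
      exact ⟨Γ₁, insert δ Γ₂, by simp [nd, ndiaS, Finset.image_insert, Finset.union_insert]⟩
  · simp only [nboxS, Finset.mem_image] at h
    obtain ⟨δ, hδ, rfl⟩ := h
    refine ⟨Δ₁, Δ₂.erase δ, ?_, ?_, by simp, by simp, ?_⟩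
    · conv_lhs => rw [← Finset.insert_erase hδ]
      simp [nboxS, Finset.image_insert, Finset.union_insert]
    · simp [diaS, nboxS, Finset.mem_erase]
    · intro Γ₁ Γ₂
      exact ⟨insert δ Γ₁, Γ₂, by simp [nd, boxS, Finset.image_insert, Finset.insert_union]⟩

lemma splitL {a : Fml} {Γ₁ Γ₂ : Ctx} (h : a ∈ boxS Γ₁ ∪ ndiaS Γ₂) :
    ∃ Γ₁' Γ₂' : Ctx,
      boxS Γ₁ ∪ ndiaS Γ₂ = insert a (boxS Γ₁' ∪ ndiaS Γ₂') ∧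
      a ∉ boxS Γ₁' ∪ ndiaS Γ₂' ∧
      (∀ ψ, a ≠ dia ψ) ∧ (∀ ψ, a ≠ neg (box ψ)) ∧
      (∀ Δ₁ Δ₂ : Ctx, ∃ Δ₁' Δ₂' : Ctx,
        insert (nd a) (diaS Δ₁ ∪ nboxS Δ₂) = diaS Δ₁' ∪ nboxS Δ₂') := by
  rw [Finset.mem_union] at h
  rcases h with h | h
  · simp only [boxS, Finset.mem_image] at h
    obtain ⟨δ, hδ, rfl⟩ := h
    refine ⟨Γ₁.erase δ, Γ₂, ?_, ?_, by simp, by simp, ?_⟩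
    · conv_lhs => rw [← Finset.insert_erase hδ]
      simp [boxS, Finset.image_insert, Finset.insert_union]
    · simp [boxS, ndiaS, Finset.mem_erase]
    · intro Δ₁ Δ₂
      exact ⟨Δ₁, insert δ Δ₂, by simp [nd, nboxS, Finset.image_insert, Finset.union_insert]⟩
  · simp only [ndiaS, Finset.mem_image] at h
    obtain ⟨δ, hδ, rfl⟩ := h
    refine ⟨Γ₁, Γ₂.erase δ, ?_, ?_, by simp, by simp, ?_⟩
    · conv_lhs => rw [← Finset.insert_erase hδ]
      simp [ndiaS, Finset.image_insert, Finset.union_insert]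
    · simp [boxS, ndiaS, Finset.mem_erase]
    · intro Δ₁ Δ₂
      exact ⟨insert δ Δ₁, Δ₂, by simp [nd, diaS, Finset.image_insert, Finset.insert_union]⟩

end Helpers
lemma negL_aux : ∀ (n : ℕ) (a : Fml), sz a ≤ n → ∀ {c : Bool} {Γ Δ : Ctx}, lTS4 c Γ Δ →
    c = false → ∀ Δ' : Ctx, Δ ⊆ insert a Δ' → lTS4 false (insert (nd a) Γ) Δ' := by
  intro n
  induction n with
  | zero => intro a ha; exact absurd ha (by have := sz_pos a; omega)
  | succ n ihn =>
    intro a ha c Γ Δ h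
    induction h with
    | initV c p =>
      intro hc Δ' hs
      rcases Finset.mem_insert.1 (hs (Finset.mem_singleton_self _)) with rfl | hmem
      · exact weakAll (lTS4.initL false p) (by intro x hx; simp at hx ⊢; tauto)
          (Finset.empty_subset _)
      · exact weakAll (lTS4.initV false p) (Finset.subset_insert _ _)
          (Finset.singleton_subset_iff.2 hmem)
    | initNV c p =>
      intro hc Δ' hs
      rcases Finset.mem_insert.1 (hs (Finset.mem_singleton_self _)) with rfl | hmem
      · exact weakAll (lTS4.initL false p) (by intro x hx; simp at hx ⊢; tauto)
          (Finset.empty_subset _)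
      · exact weakAll (lTS4.initNV false p) (Finset.subset_insert _ _)
          (Finset.singleton_subset_iff.2 hmem)
    | initL c p =>
      intro hc Δ' hs
      exact weakAll (lTS4.initL false p) (Finset.subset_insert _ _) (Finset.empty_subset _)
    | initR c p =>
      intro hc Δ' hs
      have h1 := hs (by simp : neg (var p) ∈ ({neg (var p), var p} : Ctx))
      have h2 := hs (by simp : var p ∈ ({neg (var p), var p} : Ctx))
      rcases Finset.mem_insert.1 h1 with rfl | hm1
      · rcases Finset.mem_insert.1 h2 with heq | hm2
        · simp at heq
        · simp only [nd_neg]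
          exact weakAll (lTS4.initV false p) (by simp) (Finset.singleton_subset_iff.2 hm2)
      · rcases Finset.mem_insert.1 h2 with rfl | hm2
        · simp only [nd_var]
          exact weakAll (lTS4.initNV false p) (by simp) (Finset.singleton_subset_iff.2 hm1)
        · exact weakAll (lTS4.initR false p) (Finset.empty_subset _)
            (by intro x hx; simp at hx; rcases hx with rfl | rfl; exacts [hm1, hm2])
    | cut Γ Δ α h1 h2 ih1 ih2 => exact fun hc => by simp at hc
    | weL c Γ Δ α h1 ih1 =>
      intro hc Δ' hs
      rw [Finset.insert_comm (nd a) α]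
      exact lTS4.weL _ _ _ _ (ih1 hc Δ' hs)
    | weR c Γ Δ α h1 ih1 =>
      intro hc Δ' hs
      exact ih1 hc Δ' (subTail hs)
    | andL c Γ Δ α β h1 ih1 =>
      intro hc Δ' hs
      have d1 := ih1 hc Δ' hs
      rw [Finset.insert_comm (nd a) α, Finset.insert_comm (nd a) β] at d1
      have d3 := lTS4.andL false (insert (nd a) Γ) Δ' α β d1
      rwa [Finset.insert_comm (α.and β) (nd a)] at d3
    | andR c Γ Δ α β h1 h2 ih1 ih2 =>
      intro hc Δ' hs
      have hΔ := subTail hs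
      have d1 := ih1 hc (insert α Δ') (liftIns hΔ α)
      have d2 := ih2 hc (insert β Δ') (liftIns hΔ β)
      rcases subHead hs with rfl | hmem
      · have d3 := lTS4.nandL false (insert (nd (α.and β)) Γ) Δ' α β d1 d2
        simpa [Finset.insert_idem] using d3
      · have d3 := lTS4.andR false (insert (nd a) Γ) Δ' α β d1 d2
        rwa [Finset.insert_eq_self.2 hmem] at d3
    | orL c Γ Δ α β h1 h2 ih1 ih2 =>
      intro hc Δ' hs
      have d1 := ih1 hc Δ' hs
      have d2 := ih2 hc Δ' hs
      rw [Finset.insert_comm (nd a) α] at d1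
      rw [Finset.insert_comm (nd a) β] at d2
      have d3 := lTS4.orL false (insert (nd a) Γ) Δ' α β d1 d2
      rwa [Finset.insert_comm (α.or β) (nd a)] at d3
    | orR c Γ Δ α β h1 ih1 =>
      intro hc Δ' hs
      have hΔ := subTail hs
      have d1 := ih1 hc (insert α (insert β Δ')) (liftIns (liftIns hΔ β) α)
      rcases subHead hs with rfl | hmem
      · have d3 := lTS4.norL false (insert (nd (α.or β)) Γ) Δ' α β d1
        simpa [Finset.insert_idem] using d3
      · have d3 := lTS4.orR false (insert (nd a) Γ) Δ' α β d1
        rwa [Finset.insert_eq_self.2 hmem] at d3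
    | impL c Γ Δ α β h1 h2 ih1 ih2 =>
      intro hc Δ' hs
      have d1 := ih1 hc (insert α Δ') (liftIns hs α)
      have d2 := ih2 hc Δ' hs
      rw [Finset.insert_comm (nd a) β] at d2
      have d3 := lTS4.impL false (insert (nd a) Γ) Δ' α β d1 d2
      rwa [Finset.insert_comm (α.imp β) (nd a)] at d3
    | impR c Γ Δ α β h1 ih1 =>
      intro hc Δ' hs
      have hΔ := subTail hs
      have d1 := ih1 hc (insert β Δ') (liftIns hΔ β)
      rw [Finset.insert_comm (nd a) α] at d1
      rcases subHead hs with rfl | hmem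
      · have d3 := lTS4.nimpL false (insert (nd (α.imp β)) Γ) Δ' α β d1
        simpa [Finset.insert_idem] using d3
      · have d3 := lTS4.impR false (insert (nd a) Γ) Δ' α β d1
        rwa [Finset.insert_eq_self.2 hmem] at d3
    | boxL c Γ Δ α h1 ih1 =>
      intro hc Δ' hs
      have d1 := ih1 hc Δ' hs
      rw [Finset.insert_comm (nd a) α] at d1
      have d3 := lTS4.boxL false (insert (nd a) Γ) Δ' α d1
      rwa [Finset.insert_comm α.box (nd a)] at d3
    | boxR c Γ₁ Γ₂ Δ₁ Δ₂ α h1 ih1 =>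
      intro hc Δ' hs
      rcases subHead hs with rfl | hmem
      · simp only [nd_box]
        have hD : diaS Δ₁ ∪ nboxS Δ₂ ⊆ Δ' := drop (subTail hs) (by simp [diaS, nboxS])
        exact weakAll (lTS4.nboxL false Γ₁ Γ₂ Δ₁ Δ₂ α (hc ▸ h1)) subset_rfl hD
      · by_cases hm2 : a ∈ diaS Δ₁ ∪ nboxS Δ₂
        · obtain ⟨Δ₁', Δ₂', heq, hnot, _, _, hL⟩ := splitR hm2
          obtain ⟨Γ₁', Γ₂', heqL⟩ := hL Γ₁ Γ₂
          have d1 := ih1 hc (insert α (diaS Δ₁' ∪ nboxS Δ₂'))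
            (by rw [heq, Finset.insert_comm α a])
          rw [heqL] at d1
          have d2 := lTS4.boxR false Γ₁' Γ₂' Δ₁' Δ₂' α d1
          rw [← heqL] at d2
          have hE1 : diaS Δ₁' ∪ nboxS Δ₂' ⊆ diaS Δ₁ ∪ nboxS Δ₂ := by
            rw [heq]; exact Finset.subset_insert _ _
          exact weakAll d2 subset_rfl
            (Finset.insert_subset_iff.2 ⟨hmem, drop (hE1.trans (subTail hs)) hnot⟩)
        · have hD : diaS Δ₁ ∪ nboxS Δ₂ ⊆ Δ' := drop (subTail hs) hm2
          exact weakAll (lTS4.boxR false Γ₁ Γ₂ Δ₁ Δ₂ α (hc ▸ h1)) (Finset.subset_insert _ _)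
            (Finset.insert_subset_iff.2 ⟨hmem, hD⟩)
    | diaL c Γ₁ Γ₂ Δ₁ Δ₂ α h1 ih1 =>
      intro hc Δ' hs
      by_cases hm2 : a ∈ diaS Δ₁ ∪ nboxS Δ₂
      · obtain ⟨Δ₁', Δ₂', heq, hnot, _, _, hL⟩ := splitR hm2
        obtain ⟨Γ₁', Γ₂', heqL⟩ := hL Γ₁ Γ₂
        have d1 := ih1 hc (diaS Δ₁' ∪ nboxS Δ₂') (by rw [heq])
        rw [Finset.insert_comm (nd a) α, heqL] at d1
        have d2 := lTS4.diaL false Γ₁' Γ₂' Δ₁' Δ₂' α d1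
        rw [← heqL, Finset.insert_comm α.dia (nd a)] at d2
        have hE1 : diaS Δ₁' ∪ nboxS Δ₂' ⊆ diaS Δ₁ ∪ nboxS Δ₂ := by
          rw [heq]; exact Finset.subset_insert _ _
        exact weakAll d2 subset_rfl (drop (hE1.trans hs) hnot)
      · exact weakAll (lTS4.diaL false Γ₁ Γ₂ Δ₁ Δ₂ α (hc ▸ h1)) (Finset.subset_insert _ _)
          (drop hs hm2)
    | diaR c Γ Δ α h1 ih1 =>
      intro hc Δ' hs
      have hΔ := subTail hs
      have d1 := ih1 hc (insert α Δ') (liftIns hΔ α)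
      rcases subHead hs with rfl | hmem
      · have d3 := lTS4.ndiaL false (insert (nd α.dia) Γ) Δ' α d1
        simpa [Finset.insert_idem] using d3
      · have d3 := lTS4.diaR false (insert (nd a) Γ) Δ' α d1
        rwa [Finset.insert_eq_self.2 hmem] at d3
    | nnL c Γ Δ α h1 ih1 =>
      intro hc Δ' hs
      have d1 := ih1 hc Δ' hs
      rw [Finset.insert_comm (nd a) α] at d1
      have d3 := lTS4.nnL false (insert (nd a) Γ) Δ' α d1
      rwa [Finset.insert_comm α.neg.neg (nd a)] at d3
    | nnR c Γ Δ α h1 ih1 =>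
      intro hc Δ' hs
      have hΔ := subTail hs
      have d1 := ih1 hc (insert α Δ') (liftIns hΔ α)
      rcases subHead hs with rfl | hmem
      · have hsz : sz α ≤ n := by simp [sz] at ha; omega
        have d2 := ihn α hsz d1 rfl Δ' subset_rfl
        have d3 := convL _ _ _ _ d2
        simpa [Finset.insert_idem] using d3
      · have d3 := lTS4.nnR false (insert (nd a) Γ) Δ' α d1
        rwa [Finset.insert_eq_self.2 hmem] at d3
    | nandL c Γ Δ α β h1 h2 ih1 ih2 =>
      intro hc Δ' hs
      have d1 := ih1 hc (insert α Δ') (liftIns hs α)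
      have d2 := ih2 hc (insert β Δ') (liftIns hs β)
      have d3 := lTS4.nandL false (insert (nd a) Γ) Δ' α β d1 d2
      rwa [Finset.insert_comm (α.and β).neg (nd a)] at d3
    | nandR c Γ Δ α β h1 ih1 =>
      intro hc Δ' hs
      have hΔ := subTail hs
      have d1 := ih1 hc Δ' hΔ
      rw [Finset.insert_comm (nd a) α, Finset.insert_comm (nd a) β] at d1
      rcases subHead hs with rfl | hmem
      · have d3 := lTS4.andL false (insert (nd (α.and β).neg) Γ) Δ' α β d1
        simpa [Finset.insert_idem] using d3
      · have d3 := lTS4.nandR false (insert (nd a) Γ) Δ' α β d1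
        rwa [Finset.insert_eq_self.2 hmem] at d3
    | norL c Γ Δ α β h1 ih1 =>
      intro hc Δ' hs
      have d1 := ih1 hc (insert α (insert β Δ')) (liftIns (liftIns hs β) α)
      have d3 := lTS4.norL false (insert (nd a) Γ) Δ' α β d1
      rwa [Finset.insert_comm (α.or β).neg (nd a)] at d3
    | norR c Γ Δ α β h1 h2 ih1 ih2 =>
      intro hc Δ' hs
      have hΔ := subTail hs
      have d1 := ih1 hc Δ' hΔ
      have d2 := ih2 hc Δ' hΔ
      rw [Finset.insert_comm (nd a) α] at d1
      rw [Finset.insert_comm (nd a) β] at d2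
      rcases subHead hs with rfl | hmem
      · have d3 := lTS4.orL false (insert (nd (α.or β).neg) Γ) Δ' α β d1 d2
        simpa [Finset.insert_idem] using d3
      · have d3 := lTS4.norR false (insert (nd a) Γ) Δ' α β d1 d2
        rwa [Finset.insert_eq_self.2 hmem] at d3
    | nimpL c Γ Δ α β h1 ih1 =>
      intro hc Δ' hs
      have d1 := ih1 hc (insert β Δ') (liftIns hs β)
      rw [Finset.insert_comm (nd a) α] at d1
      have d3 := lTS4.nimpL false (insert (nd a) Γ) Δ' α β d1
      rwa [Finset.insert_comm (α.imp β).neg (nd a)] at d3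
    | nimpR c Γ Δ α β h1 h2 ih1 ih2 =>
      intro hc Δ' hs
      have hΔ := subTail hs
      have d1 := ih1 hc (insert α Δ') (liftIns hΔ α)
      have d2 := ih2 hc Δ' hΔ
      rw [Finset.insert_comm (nd a) β] at d2
      rcases subHead hs with rfl | hmem
      · have d3 := lTS4.impL false (insert (nd (α.imp β).neg) Γ) Δ' α β d1 d2
        simpa [Finset.insert_idem] using d3
      · have d3 := lTS4.nimpR false (insert (nd a) Γ) Δ' α β d1 d2
        rwa [Finset.insert_eq_self.2 hmem] at d3
    | nboxL c Γ₁ Γ₂ Δ₁ Δ₂ α h1 ih1 =>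
      intro hc Δ' hs
      by_cases hm2 : a ∈ diaS Δ₁ ∪ nboxS Δ₂
      · obtain ⟨Δ₁', Δ₂', heq, hnot, _, _, hL⟩ := splitR hm2
        obtain ⟨Γ₁', Γ₂', heqL⟩ := hL Γ₁ Γ₂
        have d1 := ih1 hc (insert α (diaS Δ₁' ∪ nboxS Δ₂'))
          (by rw [heq, Finset.insert_comm α a])
        rw [heqL] at d1
        have d2 := lTS4.nboxL false Γ₁' Γ₂' Δ₁' Δ₂' α d1
        rw [← heqL, Finset.insert_comm α.box.neg (nd a)] at d2
        have hE1 : diaS Δ₁' ∪ nboxS Δ₂' ⊆ diaS Δ₁ ∪ nboxS Δ₂ := by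
          rw [heq]; exact Finset.subset_insert _ _
        exact weakAll d2 subset_rfl (drop (hE1.trans hs) hnot)
      · exact weakAll (lTS4.nboxL false Γ₁ Γ₂ Δ₁ Δ₂ α (hc ▸ h1)) (Finset.subset_insert _ _)
          (drop hs hm2)
    | nboxR c Γ Δ α h1 ih1 =>
      intro hc Δ' hs
      have hΔ := subTail hs
      have d1 := ih1 hc Δ' hΔ
      rw [Finset.insert_comm (nd a) α] at d1
      rcases subHead hs with rfl | hmem
      · have d3 := lTS4.boxL false (insert (nd α.box.neg) Γ) Δ' α d1
        simpa [Finset.insert_idem] using d3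
      · have d3 := lTS4.nboxR false (insert (nd a) Γ) Δ' α d1
        rwa [Finset.insert_eq_self.2 hmem] at d3
    | ndiaL c Γ Δ α h1 ih1 =>
      intro hc Δ' hs
      have d1 := ih1 hc (insert α Δ') (liftIns hs α)
      have d3 := lTS4.ndiaL false (insert (nd a) Γ) Δ' α d1
      rwa [Finset.insert_comm α.dia.neg (nd a)] at d3
    | ndiaR c Γ₁ Γ₂ Δ₁ Δ₂ α h1 ih1 =>
      intro hc Δ' hs
      rcases subHead hs with rfl | hmem
      · simp only [nd_neg]
        have hD : diaS Δ₁ ∪ nboxS Δ₂ ⊆ Δ' := drop (subTail hs) (by simp [diaS, nboxS])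
        exact weakAll (lTS4.diaL false Γ₁ Γ₂ Δ₁ Δ₂ α (hc ▸ h1)) subset_rfl hD
      · by_cases hm2 : a ∈ diaS Δ₁ ∪ nboxS Δ₂
        · obtain ⟨Δ₁', Δ₂', heq, hnot, _, _, hL⟩ := splitR hm2
          obtain ⟨Γ₁', Γ₂', heqL⟩ := hL Γ₁ Γ₂
          have d1 := ih1 hc (diaS Δ₁' ∪ nboxS Δ₂') (by rw [heq])
          rw [Finset.insert_comm (nd a) α, heqL] at d1
          have d2 := lTS4.ndiaR false Γ₁' Γ₂' Δ₁' Δ₂' α d1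
          rw [← heqL] at d2
          have hE1 : diaS Δ₁' ∪ nboxS Δ₂' ⊆ diaS Δ₁ ∪ nboxS Δ₂ := by
            rw [heq]; exact Finset.subset_insert _ _
          exact weakAll d2 subset_rfl
            (Finset.insert_subset_iff.2 ⟨hmem, drop (hE1.trans (subTail hs)) hnot⟩)
        · have hD := drop (subTail hs) hm2
          exact weakAll (lTS4.ndiaR false Γ₁ Γ₂ Δ₁ Δ₂ α (hc ▸ h1)) (Finset.subset_insert _ _)
            (Finset.insert_subset_iff.2 ⟨hmem, hD⟩)
lemma negR_aux : ∀ (n : ℕ) (a : Fml), sz a ≤ n → ∀ {c : Bool} {Γ Δ : Ctx}, lTS4 c Γ Δ →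
    c = false → ∀ Γ' : Ctx, Γ ⊆ insert a Γ' → lTS4 false Γ' (insert (nd a) Δ) := by
  intro n
  induction n with
  | zero => intro a ha; exact absurd ha (by have := sz_pos a; omega)
  | succ n ihn =>
    intro a ha c Γ Δ h
    induction h with
    | initV c p =>
      intro hc Γ' hs
      rcases Finset.mem_insert.1 (hs (Finset.mem_singleton_self _)) with rfl | hmem
      · exact weakAll (lTS4.initR false p) (Finset.empty_subset _)
          (by intro x hx; simp at hx ⊢; tauto)
      · exact weakAll (lTS4.initV false p) (Finset.singleton_subset_iff.2 hmem)
          (Finset.subset_insert _ _)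
    | initNV c p =>
      intro hc Γ' hs
      rcases Finset.mem_insert.1 (hs (Finset.mem_singleton_self _)) with rfl | hmem
      · exact weakAll (lTS4.initR false p) (Finset.empty_subset _)
          (by intro x hx; simp at hx ⊢; tauto)
      · exact weakAll (lTS4.initNV false p) (Finset.singleton_subset_iff.2 hmem)
          (Finset.subset_insert _ _)
    | initL c p =>
      intro hc Γ' hs
      have h1 := hs (by simp : neg (var p) ∈ ({neg (var p), var p} : Ctx))
      have h2 := hs (by simp : var p ∈ ({neg (var p), var p} : Ctx))
      rcases Finset.mem_insert.1 h1 with rfl | hm1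
      · rcases Finset.mem_insert.1 h2 with heq | hm2
        · simp at heq
        · simp only [nd_neg]
          exact weakAll (lTS4.initV false p) (Finset.singleton_subset_iff.2 hm2) (by simp)
      · rcases Finset.mem_insert.1 h2 with rfl | hm2
        · simp only [nd_var]
          exact weakAll (lTS4.initNV false p) (Finset.singleton_subset_iff.2 hm1) (by simp)
        · exact weakAll (lTS4.initL false p)
            (by intro x hx; simp at hx; rcases hx with rfl | rfl; exacts [hm1, hm2])
            (Finset.empty_subset _)
    | initR c p =>
      intro hc Γ' hs
      exact weakAll (lTS4.initR false p) (Finset.empty_subset _) (Finset.subset_insert _ _)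
    | cut Γ Δ α h1 h2 ih1 ih2 => exact fun hc => by simp at hc
    | weL c Γ Δ α h1 ih1 =>
      intro hc Γ' hs
      exact ih1 hc Γ' (subTail hs)
    | weR c Γ Δ α h1 ih1 =>
      intro hc Γ' hs
      have d := lTS4.weR false Γ' (insert (nd a) Δ) α (ih1 hc Γ' hs)
      rwa [Finset.insert_comm α (nd a)] at d
    | andL c Γ Δ α β h1 ih1 =>
      intro hc Γ' hs
      have hΓ := subTail hs
      have d1 := ih1 hc (insert α (insert β Γ')) (liftIns (liftIns hΓ β) α)
      rcases subHead hs with rfl | hmem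
      · have d3 := lTS4.nandR false Γ' (insert (nd (α.and β)) Δ) α β d1
        simpa [Finset.insert_idem] using d3
      · have d3 := lTS4.andL false Γ' (insert (nd a) Δ) α β d1
        rwa [Finset.insert_eq_self.2 hmem] at d3
    | andR c Γ Δ α β h1 h2 ih1 ih2 =>
      intro hc Γ' hs
      have d1 := ih1 hc Γ' hs
      have d2 := ih2 hc Γ' hs
      rw [Finset.insert_comm (nd a) α] at d1
      rw [Finset.insert_comm (nd a) β] at d2
      have d3 := lTS4.andR false Γ' (insert (nd a) Δ) α β d1 d2
      rwa [Finset.insert_comm (α.and β) (nd a)] at d3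
    | orL c Γ Δ α β h1 h2 ih1 ih2 =>
      intro hc Γ' hs
      have hΓ := subTail hs
      have d1 := ih1 hc (insert α Γ') (liftIns hΓ α)
      have d2 := ih2 hc (insert β Γ') (liftIns hΓ β)
      rcases subHead hs with rfl | hmem
      · have d3 := lTS4.norR false Γ' (insert (nd (α.or β)) Δ) α β d1 d2
        simpa [Finset.insert_idem] using d3
      · have d3 := lTS4.orL false Γ' (insert (nd a) Δ) α β d1 d2
        rwa [Finset.insert_eq_self.2 hmem] at d3
    | orR c Γ Δ α β h1 ih1 =>
      intro hc Γ' hs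
      have d1 := ih1 hc Γ' hs
      rw [Finset.insert_comm (nd a) α, Finset.insert_comm (nd a) β] at d1
      have d3 := lTS4.orR false Γ' (insert (nd a) Δ) α β d1
      rwa [Finset.insert_comm (α.or β) (nd a)] at d3
    | impL c Γ Δ α β h1 h2 ih1 ih2 =>
      intro hc Γ' hs
      have hΓ := subTail hs
      have d1 := ih1 hc Γ' hΓ
      rw [Finset.insert_comm (nd a) α] at d1
      have d2 := ih2 hc (insert β Γ') (liftIns hΓ β)
      rcases subHead hs with rfl | hmem
      · have d3 := lTS4.nimpR false Γ' (insert (nd (α.imp β)) Δ) α β d1 d2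
        simpa [Finset.insert_idem] using d3
      · have d3 := lTS4.impL false Γ' (insert (nd a) Δ) α β d1 d2
        rwa [Finset.insert_eq_self.2 hmem] at d3
    | impR c Γ Δ α β h1 ih1 =>
      intro hc Γ' hs
      have d1 := ih1 hc (insert α Γ') (liftIns hs α)
      rw [Finset.insert_comm (nd a) β] at d1
      have d3 := lTS4.impR false Γ' (insert (nd a) Δ) α β d1
      rwa [Finset.insert_comm (α.imp β) (nd a)] at d3
    | boxL c Γ Δ α h1 ih1 =>
      intro hc Γ' hs
      have hΓ := subTail hs
      have d1 := ih1 hc (insert α Γ') (liftIns hΓ α)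
      rcases subHead hs with rfl | hmem
      · have d3 := lTS4.nboxR false Γ' (insert (nd α.box) Δ) α d1
        simpa [Finset.insert_idem] using d3
      · have d3 := lTS4.boxL false Γ' (insert (nd a) Δ) α d1
        rwa [Finset.insert_eq_self.2 hmem] at d3
    | boxR c Γ₁ Γ₂ Δ₁ Δ₂ α h1 ih1 =>
      intro hc Γ' hs
      by_cases hm2 : a ∈ boxS Γ₁ ∪ ndiaS Γ₂
      · obtain ⟨Γ₁', Γ₂', heq, hnot, _, _, hR⟩ := splitL hm2
        obtain ⟨Δ₁', Δ₂', heqR⟩ := hR Δ₁ Δ₂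
        have d1 := ih1 hc (boxS Γ₁' ∪ ndiaS Γ₂') (by rw [heq])
        rw [Finset.insert_comm (nd a) α, heqR] at d1
        have d2 := lTS4.boxR false Γ₁' Γ₂' Δ₁' Δ₂' α d1
        rw [← heqR, Finset.insert_comm α.box (nd a)] at d2
        have hE1 : boxS Γ₁' ∪ ndiaS Γ₂' ⊆ boxS Γ₁ ∪ ndiaS Γ₂ := by
          rw [heq]; exact Finset.subset_insert _ _
        exact weakAll d2 (drop (hE1.trans hs) hnot) subset_rfl
      · exact weakAll (lTS4.boxR false Γ₁ Γ₂ Δ₁ Δ₂ α (hc ▸ h1)) (drop hs hm2)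
          (Finset.subset_insert _ _)
    | diaL c Γ₁ Γ₂ Δ₁ Δ₂ α h1 ih1 =>
      intro hc Γ' hs
      rcases subHead hs with rfl | hmem
      · simp only [nd_dia]
        have hL : boxS Γ₁ ∪ ndiaS Γ₂ ⊆ Γ' := drop (subTail hs) (by simp [boxS, ndiaS])
        exact weakAll (lTS4.ndiaR false Γ₁ Γ₂ Δ₁ Δ₂ α (hc ▸ h1)) hL subset_rfl
      · by_cases hm2 : a ∈ boxS Γ₁ ∪ ndiaS Γ₂
        · obtain ⟨Γ₁', Γ₂', heq, hnot, _, _, hR⟩ := splitL hm2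
          obtain ⟨Δ₁', Δ₂', heqR⟩ := hR Δ₁ Δ₂
          have d1 := ih1 hc (insert α (boxS Γ₁' ∪ ndiaS Γ₂'))
            (by rw [heq, Finset.insert_comm α a])
          rw [heqR] at d1
          have d2 := lTS4.diaL false Γ₁' Γ₂' Δ₁' Δ₂' α d1
          rw [← heqR] at d2
          have hE1 : boxS Γ₁' ∪ ndiaS Γ₂' ⊆ boxS Γ₁ ∪ ndiaS Γ₂ := by
            rw [heq]; exact Finset.subset_insert _ _
          exact weakAll d2
            (Finset.insert_subset_iff.2 ⟨hmem, drop (hE1.trans (subTail hs)) hnot⟩) subset_rfl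
        · exact weakAll (lTS4.diaL false Γ₁ Γ₂ Δ₁ Δ₂ α (hc ▸ h1))
            (Finset.insert_subset_iff.2 ⟨hmem, drop (subTail hs) hm2⟩)
            (Finset.subset_insert _ _)
    | diaR c Γ Δ α h1 ih1 =>
      intro hc Γ' hs
      have d1 := ih1 hc Γ' hs
      rw [Finset.insert_comm (nd a) α] at d1
      have d3 := lTS4.diaR false Γ' (insert (nd a) Δ) α d1
      rwa [Finset.insert_comm α.dia (nd a)] at d3
    | nnL c Γ Δ α h1 ih1 =>
      intro hc Γ' hs
      have hΓ := subTail hs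
      have d1 := ih1 hc (insert α Γ') (liftIns hΓ α)
      rcases subHead hs with rfl | hmem
      · have hsz : sz α ≤ n := by simp [sz] at ha; omega
        have d2 := ihn α hsz d1 rfl Γ' subset_rfl
        have d3 := convR _ _ _ _ d2
        simpa [Finset.insert_idem] using d3
      · have d3 := lTS4.nnL false Γ' (insert (nd a) Δ) α d1
        rwa [Finset.insert_eq_self.2 hmem] at d3
    | nnR c Γ Δ α h1 ih1 =>
      intro hc Γ' hs
      have d1 := ih1 hc Γ' hs
      rw [Finset.insert_comm (nd a) α] at d1
      have d3 := lTS4.nnR false Γ' (insert (nd a) Δ) α d1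
      rwa [Finset.insert_comm α.neg.neg (nd a)] at d3
    | nandL c Γ Δ α β h1 h2 ih1 ih2 =>
      intro hc Γ' hs
      have hΓ := subTail hs
      have d1 := ih1 hc Γ' hΓ
      have d2 := ih2 hc Γ' hΓ
      rw [Finset.insert_comm (nd a) α] at d1
      rw [Finset.insert_comm (nd a) β] at d2
      rcases subHead hs with rfl | hmem
      · have d3 := lTS4.andR false Γ' (insert (nd (α.and β).neg) Δ) α β d1 d2
        simpa [Finset.insert_idem] using d3
      · have d3 := lTS4.nandL false Γ' (insert (nd a) Δ) α β d1 d2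
        rwa [Finset.insert_eq_self.2 hmem] at d3
    | nandR c Γ Δ α β h1 ih1 =>
      intro hc Γ' hs
      have d1 := ih1 hc (insert α (insert β Γ')) (liftIns (liftIns hs β) α)
      have d3 := lTS4.nandR false Γ' (insert (nd a) Δ) α β d1
      rwa [Finset.insert_comm (α.and β).neg (nd a)] at d3
    | norL c Γ Δ α β h1 ih1 =>
      intro hc Γ' hs
      have hΓ := subTail hs
      have d1 := ih1 hc Γ' hΓ
      rw [Finset.insert_comm (nd a) α, Finset.insert_comm (nd a) β] at d1
      rcases subHead hs with rfl | hmem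
      · have d3 := lTS4.orR false Γ' (insert (nd (α.or β).neg) Δ) α β d1
        simpa [Finset.insert_idem] using d3
      · have d3 := lTS4.norL false Γ' (insert (nd a) Δ) α β d1
        rwa [Finset.insert_eq_self.2 hmem] at d3
    | norR c Γ Δ α β h1 h2 ih1 ih2 =>
      intro hc Γ' hs
      have d1 := ih1 hc (insert α Γ') (liftIns hs α)
      have d2 := ih2 hc (insert β Γ') (liftIns hs β)
      have d3 := lTS4.norR false Γ' (insert (nd a) Δ) α β d1 d2
      rwa [Finset.insert_comm (α.or β).neg (nd a)] at d3
    | nimpL c Γ Δ α β h1 ih1 =>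
      intro hc Γ' hs
      have hΓ := subTail hs
      have d1 := ih1 hc (insert α Γ') (liftIns hΓ α)
      rw [Finset.insert_comm (nd a) β] at d1
      rcases subHead hs with rfl | hmem
      · have d3 := lTS4.impR false Γ' (insert (nd (α.imp β).neg) Δ) α β d1
        simpa [Finset.insert_idem] using d3
      · have d3 := lTS4.nimpL false Γ' (insert (nd a) Δ) α β d1
        rwa [Finset.insert_eq_self.2 hmem] at d3
    | nimpR c Γ Δ α β h1 h2 ih1 ih2 =>
      intro hc Γ' hs
      have d1 := ih1 hc Γ' hs
      rw [Finset.insert_comm (nd a) α] at d1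
      have d2 := ih2 hc (insert β Γ') (liftIns hs β)
      have d3 := lTS4.nimpR false Γ' (insert (nd a) Δ) α β d1 d2
      rwa [Finset.insert_comm (α.imp β).neg (nd a)] at d3
    | nboxL c Γ₁ Γ₂ Δ₁ Δ₂ α h1 ih1 =>
      intro hc Γ' hs
      rcases subHead hs with rfl | hmem
      · simp only [nd_neg]
        have hL : boxS Γ₁ ∪ ndiaS Γ₂ ⊆ Γ' := drop (subTail hs) (by simp [boxS, ndiaS])
        exact weakAll (lTS4.boxR false Γ₁ Γ₂ Δ₁ Δ₂ α (hc ▸ h1)) hL subset_rfl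
      · by_cases hm2 : a ∈ boxS Γ₁ ∪ ndiaS Γ₂
        · obtain ⟨Γ₁', Γ₂', heq, hnot, _, _, hR⟩ := splitL hm2
          obtain ⟨Δ₁', Δ₂', heqR⟩ := hR Δ₁ Δ₂
          have d1 := ih1 hc (boxS Γ₁' ∪ ndiaS Γ₂') (by rw [heq])
          rw [Finset.insert_comm (nd a) α, heqR] at d1
          have d2 := lTS4.nboxL false Γ₁' Γ₂' Δ₁' Δ₂' α d1
          rw [← heqR] at d2
          have hE1 : boxS Γ₁' ∪ ndiaS Γ₂' ⊆ boxS Γ₁ ∪ ndiaS Γ₂ := by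
            rw [heq]; exact Finset.subset_insert _ _
          exact weakAll d2
            (Finset.insert_subset_iff.2 ⟨hmem, drop (hE1.trans (subTail hs)) hnot⟩) subset_rfl
        · exact weakAll (lTS4.nboxL false Γ₁ Γ₂ Δ₁ Δ₂ α (hc ▸ h1))
            (Finset.insert_subset_iff.2 ⟨hmem, drop (subTail hs) hm2⟩)
            (Finset.subset_insert _ _)
    | nboxR c Γ Δ α h1 ih1 =>
      intro hc Γ' hs
      have d1 := ih1 hc (insert α Γ') (liftIns hs α)
      have d3 := lTS4.nboxR false Γ' (insert (nd a) Δ) α d1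
      rwa [Finset.insert_comm α.box.neg (nd a)] at d3
    | ndiaL c Γ Δ α h1 ih1 =>
      intro hc Γ' hs
      have hΓ := subTail hs
      have d1 := ih1 hc Γ' hΓ
      rw [Finset.insert_comm (nd a) α] at d1
      rcases subHead hs with rfl | hmem
      · have d3 := lTS4.diaR false Γ' (insert (nd α.dia.neg) Δ) α d1
        simpa [Finset.insert_idem] using d3
      · have d3 := lTS4.ndiaL false Γ' (insert (nd a) Δ) α d1
        rwa [Finset.insert_eq_self.2 hmem] at d3
    | ndiaR c Γ₁ Γ₂ Δ₁ Δ₂ α h1 ih1 =>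
      intro hc Γ' hs
      by_cases hm2 : a ∈ boxS Γ₁ ∪ ndiaS Γ₂
      · obtain ⟨Γ₁', Γ₂', heq, hnot, _, _, hR⟩ := splitL hm2
        obtain ⟨Δ₁', Δ₂', heqR⟩ := hR Δ₁ Δ₂
        have d1 := ih1 hc (insert α (boxS Γ₁' ∪ ndiaS Γ₂'))
          (by rw [heq, Finset.insert_comm α a])
        rw [heqR] at d1
        have d2 := lTS4.ndiaR false Γ₁' Γ₂' Δ₁' Δ₂' α d1
        rw [← heqR, Finset.insert_comm α.dia.neg (nd a)] at d2
        have hE1 : boxS Γ₁' ∪ ndiaS Γ₂' ⊆ boxS Γ₁ ∪ ndiaS Γ₂ := by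
          rw [heq]; exact Finset.subset_insert _ _
        exact weakAll d2 (drop (hE1.trans hs) hnot) subset_rfl
      · exact weakAll (lTS4.ndiaR false Γ₁ Γ₂ Δ₁ Δ₂ α (hc ▸ h1)) (drop hs hm2)
          (Finset.subset_insert _ _)
lemma negL_final {Γ Δ : Ctx} {α : Fml} (h : lTS4 false Γ (insert α Δ)) :
    lTS4 false (insert α.neg Γ) Δ :=
  convL _ _ _ _ (negL_aux (sz α) α le_rfl h rfl Δ subset_rfl)

lemma negR_final {Γ Δ : Ctx} {α : Fml} (h : lTS4 false (insert α Γ) Δ) :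
    lTS4 false Γ (insert α.neg Δ) :=
  convR _ _ _ _ (negR_aux (sz α) α le_rfl h rfl Γ subset_rfl)

/-- every sequent provable in cut-free GS4 is provable in cut-free lTS4. -/
theorem stmt8 (Γ Δ : Ctx) (h : GS4 false Γ Δ) : lTS4 false Γ Δ := by
  have main : ∀ {c : Bool} {Γ Δ : Ctx}, GS4 c Γ Δ → c = false → lTS4 false Γ Δ := by
    intro c Γ Δ h
    induction h with
    | initV c p => exact fun _ => lTS4.initV false p
    | cut Γ Δ α h1 h2 ih1 ih2 => exact fun hc => by simp at hc
    | weL c Γ Δ α h1 ih1 => exact fun hc => lTS4.weL _ _ _ _ (ih1 hc)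
    | weR c Γ Δ α h1 ih1 => exact fun hc => lTS4.weR _ _ _ _ (ih1 hc)
    | andL c Γ Δ α β h1 ih1 => exact fun hc => lTS4.andL _ _ _ _ _ (ih1 hc)
    | andR c Γ Δ α β h1 h2 ih1 ih2 => exact fun hc => lTS4.andR _ _ _ _ _ (ih1 hc) (ih2 hc)
    | orL c Γ Δ α β h1 h2 ih1 ih2 => exact fun hc => lTS4.orL _ _ _ _ _ (ih1 hc) (ih2 hc)
    | orR c Γ Δ α β h1 ih1 => exact fun hc => lTS4.orR _ _ _ _ _ (ih1 hc)
    | impL c Γ Δ α β h1 h2 ih1 ih2 => exact fun hc => lTS4.impL _ _ _ _ _ (ih1 hc) (ih2 hc)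
    | impR c Γ Δ α β h1 ih1 => exact fun hc => lTS4.impR _ _ _ _ _ (ih1 hc)
    | negL c Γ Δ α h1 ih1 => exact fun hc => negL_final (ih1 hc)
    | negR c Γ Δ α h1 ih1 => exact fun hc => negR_final (ih1 hc)
    | boxL c Γ Δ α h1 ih1 => exact fun hc => lTS4.boxL _ _ _ _ (ih1 hc)
    | boxRk c Γ Δ α h1 ih1 =>
      intro hc
      have e1 : boxS Γ ∪ ndiaS (∅ : Ctx) = boxS Γ := by simp [ndiaS]
      have e2 : diaS Δ ∪ nboxS (∅ : Ctx) = diaS Δ := by simp [nboxS]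
      have d := lTS4.boxR false Γ ∅ Δ ∅ α (by rw [e1, e2]; exact ih1 hc)
      rwa [e1, e2] at d
    | diaLk c Γ Δ α h1 ih1 =>
      intro hc
      have e1 : boxS Γ ∪ ndiaS (∅ : Ctx) = boxS Γ := by simp [ndiaS]
      have e2 : diaS Δ ∪ nboxS (∅ : Ctx) = diaS Δ := by simp [nboxS]
      have d := lTS4.diaL false Γ ∅ Δ ∅ α (by rw [e1, e2]; exact ih1 hc)
      rwa [e1, e2] at d
    | diaR c Γ Δ α h1 ih1 => exact fun hc => lTS4.diaR _ _ _ _ (ih1 hc)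
  exact main h rfl
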